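/- arXiv:math/9910050 — 4 statements merged into one kernel-verified Lean document; each statement's English description precedes it below -/
import Mathlib

section
/- Suppose that almost surely there exists t ≥ 1 such that f_t ∘ ⋯ ∘ f_1 is a constant function. Then, almost surely, there exists t ≥ 1 such that the backward composition G_t := f_1 ∘ f_2 ∘ ⋯ ∘ f_t is a constant function, and whenever G_t is constant, G_{t'} is the same constant function for every t' ≥ t. Consequently, for every x₀ ∈ S the limit W := lim_{t→∞} G_t(x₀) exists almost surely and its value does not depend on the choice of x₀. -/
open MeasureTheory ProbabilityTheory Filter

noncomputable section

variable {Ω S : Type*}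

/-- Forward composition of the random maps with indices `1, …, t`:
`fwdComp f t ω = f t ω ∘ ⋯ ∘ f 1 ω`. -/
def fwdComp (f : ℕ → Ω → S → S) : ℕ → Ω → S → S
  | 0 => fun _ => id
  | n + 1 => fun ω => f (n + 1) ω ∘ fwdComp f n ω

/-- Backward composition of the random maps with indices `1, …, t`:
`bwdComp f t ω = f 1 ω ∘ f 2 ω ∘ ⋯ ∘ f t ω`. -/
def bwdComp (f : ℕ → Ω → S → S) : ℕ → Ω → S → S
  | 0 => fun _ => id
  | n + 1 => fun ω => bwdComp f n ω ∘ f (n + 1) ω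

/-- A function is constant. -/
def IsConstMap (S : Type*) (g : S → S) : Prop := ∃ c, g = Function.const S c

/-- Forward composition of a finite vector of maps. -/
def compF : ∀ t : ℕ, (Fin t → S → S) → S → S
  | 0, _ => id
  | t + 1, v => v (Fin.last t) ∘ compF t (v ∘ Fin.castSucc)

/-- Backward composition of a finite vector of maps. -/
def compB : ∀ t : ℕ, (Fin t → S → S) → S → S
  | 0, _ => id
  | t + 1, v => compB t (v ∘ Fin.castSucc) ∘ v (Fin.last t)

lemma fwdComp_eq_compF (f : ℕ → Ω → S → S) (t : ℕ) (ω : Ω) :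
    fwdComp f t ω = compF t (fun i : Fin t => f (i + 1) ω) := by
  induction t with
  | zero => rfl
  | succ n ih =>
    show f (n + 1) ω ∘ fwdComp f n ω = _
    rw [ih]; rfl

lemma bwdComp_eq_compB (f : ℕ → Ω → S → S) (t : ℕ) (ω : Ω) :
    bwdComp f t ω = compB t (fun i : Fin t => f (i + 1) ω) := by
  induction t with
  | zero => rfl
  | succ n ih =>
    show bwdComp f n ω ∘ f (n + 1) ω = _
    rw [ih]; rfl

lemma compF_front (t : ℕ) (v : Fin (t + 1) → S → S) :
    compF (t + 1) v = compF t (v ∘ Fin.succ) ∘ v 0 := by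
  induction t with
  | zero => ext x; rfl
  | succ n ih =>
    show v (Fin.last (n + 1)) ∘ compF (n + 1) (v ∘ Fin.castSucc) = _
    rw [ih (v ∘ Fin.castSucc)]
    have h1 : (v ∘ Fin.castSucc) ∘ Fin.succ = (v ∘ Fin.succ) ∘ Fin.castSucc := by
      funext i
      simp only [Function.comp_apply, Fin.succ_castSucc]
    have h2 : (v ∘ Fin.castSucc) 0 = v 0 := by
      simp only [Function.comp_apply, Fin.castSucc_zero]
    rw [h1, h2]
    rfl

lemma compB_eq_compF_rev (t : ℕ) (v : Fin t → S → S) :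
    compB t v = compF t (v ∘ Fin.rev) := by
  induction t with
  | zero => rfl
  | succ n ih =>
    show compB n (v ∘ Fin.castSucc) ∘ v (Fin.last n) = _
    rw [ih, compF_front]
    have h1 : (v ∘ Fin.rev) ∘ Fin.succ = (v ∘ Fin.castSucc) ∘ Fin.rev := by
      funext i
      simp only [Function.comp_apply, Fin.rev_succ]
    have h2 : (v ∘ Fin.rev) 0 = v (Fin.last n) := by
      simp only [Function.comp_apply, Fin.rev_zero]
    rw [h1, h2]

lemma bwdComp_const (f : ℕ → Ω → S → S) (ω : Ω) {t : ℕ} {c : S}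
    (h : bwdComp f t ω = Function.const S c) :
    ∀ t', t ≤ t' → bwdComp f t' ω = Function.const S c := by
  intro t' ht'
  induction t' , ht' using Nat.le_induction with
  | base => exact h
  | succ n hn ih =>
    show bwdComp f n ω ∘ f (n + 1) ω = Function.const S c
    rw [ih]
    rfl

/-- If almost surely some forward composition `f t ∘ ⋯ ∘ f 1` is constant,
then almost surely some backward composition `G t = f 1 ∘ ⋯ ∘ f t` is constant; whenever
`G t` is constant, `G t'` is the same constant function for all `t' ≥ t`; and consequently
there is a value `w` such that, for every starting state `x₀`, `G t x₀` is eventually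
equal to `w` (the limit exists and does not depend on `x₀`). -/
theorem stmt2 [MeasureSpace Ω] [IsProbabilityMeasure (ℙ : Measure Ω)]
    [Fintype S] [Nonempty S] [MeasurableSpace S] [MeasurableSingletonClass S]
    (f : ℕ → Ω → S → S) (hmeas : ∀ n, Measurable (f n))
    (hindep : iIndepFun f ℙ)
    (hident : ∀ n, IdentDistrib (f n) (f 1) ℙ ℙ)
    (hcoal : ∀ᵐ ω ∂ℙ, ∃ t, 1 ≤ t ∧ IsConstMap S (fwdComp f t ω)) :
    ∀ᵐ ω ∂ℙ,
      (∃ t, 1 ≤ t ∧ IsConstMap S (bwdComp f t ω)) ∧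
      (∀ t c, bwdComp f t ω = Function.const S c →
        ∀ t', t ≤ t' → bwdComp f t' ω = Function.const S c) ∧
      ∃ w : S, ∀ x₀ : S, ∀ᶠ t in atTop, bwdComp f t ω x₀ = w := by
  classical
  -- the tuple map at stage t
  set F : ∀ t : ℕ, Ω → (Fin t → S → S) := fun t ω i => f (i + 1) ω with hF
  have hFmeas : ∀ t, Measurable (F t) := fun t =>
    measurable_pi_lambda _ (fun i => hmeas (i + 1))
  -- probability of each tuple value
  have hEv : ∀ (t : ℕ) (v : Fin t → S → S),
      ℙ (F t ⁻¹' {v}) = ∏ i : Fin t, ℙ (f 1 ⁻¹' {v i}) := by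
    intro t v
    -- extend v to ℕ
    set v' : ℕ → S → S := fun n => if h : n < t then v ⟨n, h⟩ else id with hv'
    set T : Finset ℕ := (Finset.range t).image Nat.succ with hT
    have hset : F t ⁻¹' {v} = ⋂ n ∈ T, f n ⁻¹' ({v' (n - 1)} : Set (S → S)) := by
      ext ω
      simp only [Set.mem_preimage, Set.mem_singleton_iff, Set.mem_iInter, hT,
        Finset.mem_image, Finset.mem_range]
      constructor
      · rintro h n ⟨i, hi, rfl⟩
        have : v' (Nat.succ i - 1) = v ⟨i, hi⟩ := by
          simp only [Nat.succ_sub_one, hv', dif_pos hi]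
        rw [this]
        exact congrFun h ⟨i, hi⟩
      · intro h
        funext i
        have := h (i + 1) ⟨i, i.isLt, rfl⟩
        have hv : v' (i + 1 - 1) = v i := by
          simp only [Nat.add_sub_cancel, hv', dif_pos i.isLt, Fin.eta]
        rwa [hv] at this
    rw [hset,
      hindep.measure_inter_preimage_eq_mul T (sets := fun n => ({v' (n - 1)} : Set (S → S)))
        (fun n _ => measurableSet_singleton _)]
    have h1 : ∀ n ∈ T, ℙ (f n ⁻¹' {v' (n - 1)}) = ℙ (f 1 ⁻¹' {v' (n - 1)}) := by
      intro n _
      exact (hident n).measure_mem_eq (measurableSet_singleton _)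
    rw [Finset.prod_congr rfl h1, hT,
      Finset.prod_image (fun a _ b _ h => Nat.succ_injective h)]
    have h2 : ∀ i ∈ Finset.range t, ℙ (f 1 ⁻¹' {v' (Nat.succ i - 1)}) = ℙ (f 1 ⁻¹' {v' i}) := by
      intro i _; rw [Nat.succ_sub_one]
    rw [Finset.prod_congr rfl h2, ← Fin.prod_univ_eq_prod_range (fun i => ℙ (f 1 ⁻¹' {v' i})) t]
    refine Finset.prod_congr rfl fun i _ => ?_
    have : v' (i : ℕ) = v i := by simp only [hv', dif_pos i.isLt, Fin.eta]
    rw [this]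
  -- measure of an event defined through the tuple
  have hmeasEvent : ∀ (t : ℕ) (P : (Fin t → S → S) → Prop),
      ℙ {ω | P (F t ω)} =
        ∑ v ∈ Finset.univ.filter P, ∏ i : Fin t, ℙ (f 1 ⁻¹' {v i}) := by
    intro t P
    have hdecomp : {ω | P (F t ω)} = ⋃ v ∈ Finset.univ.filter P, F t ⁻¹' {v} := by
      ext ω
      simp only [Set.mem_setOf_eq, Set.mem_iUnion, Set.mem_preimage,
        Set.mem_singleton_iff, Finset.mem_filter, Finset.mem_univ, true_and]
      constructor
      · intro h; exact ⟨F t ω, h, rfl⟩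
      · rintro ⟨v, hv, rfl⟩; exact hv
    rw [hdecomp, measure_biUnion_finset ?_ (fun v _ => (hFmeas t) (measurableSet_singleton v))]
    · exact Finset.sum_congr rfl fun v _ => hEv t v
    · intro v _ w _ hvw
      simp only [Function.onFun]
      rw [Set.disjoint_left]
      rintro ω hv hw
      exact hvw (hv.symm.trans hw)
  -- the forward and backward coalescence events
  set A : ℕ → Set Ω := fun t => {ω | IsConstMap S (fwdComp f t ω)} with hA
  set B : ℕ → Set Ω := fun t => {ω | IsConstMap S (bwdComp f t ω)} with hB
  have hAB : ∀ t, ℙ (A t) = ℙ (B t) := by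
    intro t
    have hA' : A t = {ω | IsConstMap S (compF t (F t ω))} := by
      ext ω; simp only [hA, Set.mem_setOf_eq, fwdComp_eq_compF, hF]
    have hB' : B t = {ω | IsConstMap S (compB t (F t ω))} := by
      ext ω; simp only [hB, Set.mem_setOf_eq, bwdComp_eq_compB, hF]
    rw [hA', hB', hmeasEvent t (fun v => IsConstMap S (compF t v)),
      hmeasEvent t (fun v => IsConstMap S (compB t v))]
    have hrevrev : ∀ v : Fin t → S → S, (v ∘ Fin.rev) ∘ Fin.rev = v := by
      intro v; funext i; simp only [Function.comp_apply, Fin.rev_rev]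
    refine Finset.sum_nbij' (fun v => v ∘ Fin.rev) (fun v => v ∘ Fin.rev) ?_ ?_ ?_ ?_ ?_
    · intro v hv
      simp only [Finset.mem_filter, Finset.mem_univ, true_and] at hv ⊢
      rw [compB_eq_compF_rev, hrevrev]
      exact hv
    · intro v hv
      simp only [Finset.mem_filter, Finset.mem_univ, true_and] at hv ⊢
      rwa [compB_eq_compF_rev] at hv
    · intro v _
      exact hrevrev v
    · intro v _
      exact hrevrev v
    · intro v _
      exact (Equiv.prod_comp Fin.revPerm (fun i => ℙ (f 1 ⁻¹' {v i}))).symm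
  -- measurability of the events
  have hBmeas : ∀ t, MeasurableSet (B t) := by
    intro t
    have : B t = F t ⁻¹' {v | IsConstMap S (compB t v)} := by
      ext ω; simp only [hB, Set.mem_setOf_eq, Set.mem_preimage, bwdComp_eq_compB, hF]
    rw [this]
    exact (hFmeas t) (MeasurableSet.of_discrete)
  have hAmeas : ∀ t, MeasurableSet (A t) := by
    intro t
    have : A t = F t ⁻¹' {v | IsConstMap S (compF t v)} := by
      ext ω; simp only [hA, Set.mem_setOf_eq, Set.mem_preimage, fwdComp_eq_compF, hF]
    rw [this]
    exact (hFmeas t) (MeasurableSet.of_discrete)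
  -- monotonicity
  have hAmono : Monotone A := by
    intro s t hst
    intro ω hω
    obtain ⟨c, hc⟩ := hω
    induction t, hst using Nat.le_induction with
    | base => exact ⟨c, hc⟩
    | succ n hn ih =>
      obtain ⟨d, hd⟩ := ih
      refine ⟨f (n + 1) ω d, ?_⟩
      show f (n + 1) ω ∘ fwdComp f n ω = _
      rw [hd]
      rfl
  have hBmono : Monotone B := by
    intro s t hst ω hω
    obtain ⟨c, hc⟩ := hω
    exact ⟨c, bwdComp_const f ω hc t hst⟩
  -- the forward union has full measure
  have hAfull : ℙ (⋃ t, A t) = 1 := by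
    have h1 : ∀ᵐ ω ∂ℙ, ω ∈ ⋃ t, A t := by
      filter_upwards [hcoal] with ω hω
      obtain ⟨t, _, hconst⟩ := hω
      exact Set.mem_iUnion.2 ⟨t, hconst⟩
    have := MeasureTheory.measure_congr
      (Filter.eventuallyEq_univ.2 h1 : (⋃ t, A t) =ᵐ[ℙ] Set.univ)
    simpa using this
  -- hence the backward union has full measure
  have hBfull : ℙ (⋃ t, B t) = 1 := by
    rw [(hBmono.directed_le).measure_iUnion]
    have := (hAmono.directed_le).measure_iUnion (μ := ℙ)
    rw [hAfull] at this
    calc ⨆ t, ℙ (B t) = ⨆ t, ℙ (A t) := by simp_rw [hAB]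
    _ = 1 := this.symm
  have hBae : ∀ᵐ ω ∂ℙ, ω ∈ ⋃ t, B t := by
    rw [MeasureTheory.ae_iff]
    have hc : MeasurableSet (⋃ t, B t) := MeasurableSet.iUnion hBmeas
    have : ℙ (⋃ t, B t)ᶜ = 1 - ℙ (⋃ t, B t) := by
      rw [measure_compl hc (measure_ne_top _ _), measure_univ]
    simp only [Set.compl_def] at this ⊢
    rw [this, hBfull]
    simp
  -- conclusion
  filter_upwards [hBae] with ω hω
  obtain ⟨t, ht⟩ := Set.mem_iUnion.1 hω
  obtain ⟨c, hc⟩ := ht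
  have hmax : bwdComp f (max t 1) ω = Function.const S c :=
    bwdComp_const f ω hc _ (le_max_left _ _)
  refine ⟨⟨max t 1, le_max_right _ _, ⟨c, hmax⟩⟩,
    fun s d hd s' hs' => bwdComp_const f ω hd s' hs', ⟨c, fun x₀ => ?_⟩⟩
  filter_upwards [Filter.eventually_ge_atTop t] with s hs
  rw [bwdComp_const f ω hc s hs]
  rfl
end
end

section
/- (Correctness of coupling from the past.) Suppose the random maps preserve π and that almost surely there exists t ≥ 1 such that f_t ∘ ⋯ ∘ f_1 is a constant function. Then for any fixed x₀ ∈ S, the almost-sure limit W := lim_{t→∞} (f_1 ∘ f_2 ∘ ⋯ ∘ f_t)(x₀) has law π. -/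
open MeasureTheory ProbabilityTheory Filter Topology

noncomputable section

variable {Ω S : Type*}

/-- A probability measure `π` on `S` is preserved by a random map with law `ν`
(a measure on `S → S`) if applying an independent `ν`-distributed map to a
`π`-distributed state yields a `π`-distributed state. -/
def PreservesMeasure {S : Type*} [MeasurableSpace S]
    (ν : Measure (S → S)) (π : Measure S) : Prop :=
  Measure.map (fun p : (S → S) × S => p.1 p.2) (ν.prod π) = π

/-! ### Auxiliary compositions -/

/-- Composition of a vector of maps with the `last` index outermost. -/
def phiF : ∀ t, (Fin t → S → S) → S → S
  | 0, _ => id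
  | t + 1, v => v (Fin.last t) ∘ phiF t (v ∘ Fin.castSucc)

/-- Composition of a vector of maps with the `last` index innermost. -/
def phiB : ∀ t, (Fin t → S → S) → S → S
  | 0, _ => id
  | t + 1, v => phiB t (v ∘ Fin.castSucc) ∘ v (Fin.last t)

lemma phiB_succ : ∀ (t) (v : Fin (t + 1) → S → S),
    phiB (t + 1) v = v 0 ∘ phiB t (v ∘ Fin.succ)
  | 0, v => rfl
  | (t+1), v => by
    show phiB (t + 1) (v ∘ Fin.castSucc) ∘ v (Fin.last (t + 1)) = _
    rw [phiB_succ t (v ∘ Fin.castSucc)]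
    have h1 : (v ∘ Fin.castSucc) ∘ Fin.succ = (v ∘ Fin.succ) ∘ Fin.castSucc := by
      funext i
      simp only [Function.comp_apply, Fin.succ_castSucc]
    have h2 : v (Fin.last (t + 1)) = (v ∘ Fin.succ) (Fin.last t) := by
      simp [Fin.succ_last]
    rw [h1, h2]
    show ((v ∘ Fin.castSucc) 0 ∘ phiB t ((v ∘ Fin.succ) ∘ Fin.castSucc)) ∘ (v ∘ Fin.succ) (Fin.last t)
      = v 0 ∘ (phiB t ((v ∘ Fin.succ) ∘ Fin.castSucc) ∘ (v ∘ Fin.succ) (Fin.last t))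
    have h3 : (v ∘ Fin.castSucc) 0 = v 0 := by simp
    rw [h3, Function.comp_assoc]

lemma phiF_rev : ∀ (t) (v : Fin t → S → S), phiF t (v ∘ Fin.rev) = phiB t v
  | 0, _ => rfl
  | (t+1), v => by
    show (v ∘ Fin.rev) (Fin.last t) ∘ phiF t ((v ∘ Fin.rev) ∘ Fin.castSucc) = _
    have h1 : (v ∘ Fin.rev) ∘ Fin.castSucc = (v ∘ Fin.succ) ∘ Fin.rev := by
      funext i
      simp only [Function.comp_apply, Fin.rev_castSucc]
    have h2 : (v ∘ Fin.rev) (Fin.last t) = v 0 := by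
      simp [Fin.rev_last]
    rw [h1, h2, phiF_rev t (v ∘ Fin.succ), phiB_succ]

lemma fwdComp_eq_phiF (f : ℕ → Ω → S → S) (ω : Ω) :
    ∀ t, fwdComp f t ω = phiF t (fun i : Fin t => f ((i : ℕ) + 1) ω)
  | 0 => rfl
  | (t+1) => by
    show f (t + 1) ω ∘ fwdComp f t ω = _
    rw [fwdComp_eq_phiF f ω t]
    show _ = (fun i : Fin (t+1) => f ((i : ℕ) + 1) ω) (Fin.last t)
      ∘ phiF t ((fun i : Fin (t+1) => f ((i : ℕ) + 1) ω) ∘ Fin.castSucc)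
    have h1 : ((fun i : Fin (t+1) => f ((i : ℕ) + 1) ω) ∘ Fin.castSucc)
        = fun i : Fin t => f ((i : ℕ) + 1) ω := by
      funext i; simp
    rw [h1]
    simp

lemma bwdComp_eq_phiB (f : ℕ → Ω → S → S) (ω : Ω) :
    ∀ t, bwdComp f t ω = phiB t (fun i : Fin t => f ((i : ℕ) + 1) ω)
  | 0 => rfl
  | (t+1) => by
    show bwdComp f t ω ∘ f (t + 1) ω = _
    rw [bwdComp_eq_phiB f ω t]
    show _ = phiB t ((fun i : Fin (t+1) => f ((i : ℕ) + 1) ω) ∘ Fin.castSucc)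
      ∘ (fun i : Fin (t+1) => f ((i : ℕ) + 1) ω) (Fin.last t)
    have h1 : ((fun i : Fin (t+1) => f ((i : ℕ) + 1) ω) ∘ Fin.castSucc)
        = fun i : Fin t => f ((i : ℕ) + 1) ω := by
      funext i; simp
    rw [h1]
    simp

section Measure

variable [Fintype S] [Nonempty S] [MeasurableSpace S] [MeasurableSingletonClass S]
variable [MeasureSpace Ω] [IsProbabilityMeasure (ℙ : Measure Ω)]

/-- The joint law of finitely many of the i.i.d. random maps is the product of copies
of the common law. -/
lemma map_vec_eq_pi (f : ℕ → Ω → S → S) (hmeas : ∀ n, Measurable (f n))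
    (hindep : iIndepFun f ℙ)
    (hident : ∀ n, IdentDistrib (f n) (f 1) ℙ ℙ)
    (t : ℕ) (g : Fin t → ℕ) (hg : Function.Injective g) :
    Measure.map (fun ω (i : Fin t) => f (g i) ω) ℙ
      = Measure.pi fun _ : Fin t => Measure.map (f 1) ℙ := by
  classical
  have hvec : Measurable (fun ω (i : Fin t) => f (g i) ω) :=
    measurable_pi_iff.2 fun i => hmeas (g i)
  refine Measure.ext_of_singleton fun v => ?_
  set sets : ℕ → Set (S → S) := fun n =>
    if h : ∃ i, g i = n then {v h.choose} else Set.univ with hsets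
  have hsets_g : ∀ i, sets (g i) = {v i} := by
    intro i
    have h : ∃ j, g j = g i := ⟨i, rfl⟩
    rw [hsets]
    simp only [dif_pos h]
    rw [hg h.choose_spec]
  have hpre : (fun ω (i : Fin t) => f (g i) ω) ⁻¹' {v}
      = ⋂ n ∈ Finset.image g Finset.univ, f n ⁻¹' sets n := by
    ext ω
    simp only [Set.mem_preimage, Set.mem_singleton_iff, Set.mem_iInter,
      Finset.mem_image, Finset.mem_univ, true_and]
    constructor
    · rintro h n ⟨i, rfl⟩
      rw [hsets_g i, Set.mem_singleton_iff]
      exact congrFun h i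
    · intro h
      funext i
      have := h (g i) ⟨i, rfl⟩
      rwa [hsets_g i, Set.mem_singleton_iff] at this
  rw [Measure.map_apply hvec (measurableSet_singleton v), hpre,
    hindep.measure_inter_preimage_eq_mul _ (fun n _ => MeasurableSet.of_discrete),
    Finset.prod_image (fun a _ b _ h => hg h), ← Set.univ_pi_singleton v, Measure.pi_pi]
  refine Finset.prod_congr rfl fun i _ => ?_
  rw [hsets_g i, ← (hident (g i)).map_eq,
    Measure.map_apply (hmeas (g i)) (measurableSet_singleton _)]

/-- The backward composition applied to an independent `π`-distributed initial state
is `π`-distributed. -/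
lemma map_bwd_pair (f : ℕ → Ω → S → S) (hmeas : ∀ n, Measurable (f n))
    (hindep : iIndepFun f ℙ)
    (hident : ∀ n, IdentDistrib (f n) (f 1) ℙ ℙ)
    (π : Measure S) [IsProbabilityMeasure π]
    (hπ : PreservesMeasure (Measure.map (f 1) ℙ) π) (t : ℕ) :
    Measure.map (fun p : Ω × S => bwdComp f t p.1 p.2) ((ℙ : Measure Ω).prod π) = π := by
  set μ : Measure (S → S) := Measure.map (f 1) ℙ with hμ
  haveI : IsProbabilityMeasure μ := Measure.isProbabilityMeasure_map (hmeas 1).aemeasurable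
  have key : ∀ t, Measure.map (fun q : (Fin t → S → S) × S => phiB t q.1 q.2)
      ((Measure.pi fun _ : Fin t => μ).prod π) = π := by
    intro t
    induction t with
    | zero =>
      have h0 : (fun q : (Fin 0 → S → S) × S => phiB 0 q.1 q.2) = Prod.snd := rfl
      rw [h0, Measure.map_snd_prod, measure_univ, one_smul]
    | succ t ih =>
      set ν : Measure (Fin t → S → S) := Measure.pi fun _ : Fin t => μ with hν
      set e := MeasurableEquiv.piFinSuccAbove (fun _ : Fin (t + 1) => S → S) (Fin.last t)
        with he
      have hpres : MeasurePreserving e (Measure.pi fun _ : Fin (t + 1) => μ) (μ.prod ν) :=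
        measurePreserving_piFinSuccAbove (fun _ : Fin (t + 1) => μ) (Fin.last t)
      have heval : ∀ v : Fin (t + 1) → S → S,
          e v = (v (Fin.last t), fun j : Fin t => v (Fin.castSucc j)) := by
        intro v
        rw [he]
        simp [MeasurableEquiv.piFinSuccAbove, Fin.succAbove_last, Fin.init]
        rfl
      set K : ((S → S) × (Fin t → S → S)) × S → S :=
        fun r => phiB t r.1.2 (r.1.1 r.2) with hK
      have hKmeas : Measurable K := Measurable.of_discrete
      have hcomp : (fun q : (Fin (t + 1) → S → S) × S => phiB (t + 1) q.1 q.2)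
          = K ∘ Prod.map e id := by
        funext q
        simp only [Function.comp_apply, Prod.map_fst, Prod.map_snd, id_eq, hK, heval q.1]
        rfl
      rw [hcomp, ← Measure.map_map hKmeas (e.measurable.prodMap measurable_id),
        (hpres.prod (MeasurePreserving.id π)).map_eq]
      -- now push K through the shuffles
      set L : ((S → S) × (Fin t → S → S)) × S → (Fin t → S → S) × S :=
        fun r => (r.1.2, r.1.1 r.2) with hL
      have hKL : K = (fun q : (Fin t → S → S) × S => phiB t q.1 q.2) ∘ L := rfl
      have hLmeas : Measurable L := Measurable.of_discrete
      have hLmap : Measure.map L ((μ.prod ν).prod π) = ν.prod π := by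
        have hev : Measurable (fun z : (S → S) × S => z.1 z.2) := Measurable.of_discrete
        have hL1 : L = (Prod.map (id : (Fin t → S → S) → (Fin t → S → S))
              (fun z : (S → S) × S => z.1 z.2))
            ∘ ((MeasurableEquiv.prodAssoc : ((Fin t → S → S) × (S → S)) × S ≃ᵐ _)
            ∘ (Prod.map Prod.swap (id : S → S))) := rfl
        have s1 : Measure.map (Prod.map Prod.swap (id : S → S)) ((μ.prod ν).prod π)
            = (ν.prod μ).prod π := by
          rw [← Measure.map_prod_map _ _ measurable_swap measurable_id,
            Measure.prod_swap, Measure.map_id]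
        have s2 : Measure.map (⇑(MeasurableEquiv.prodAssoc :
              ((Fin t → S → S) × (S → S)) × S ≃ᵐ _)) ((ν.prod μ).prod π)
            = ν.prod (μ.prod π) :=
          (measurePreserving_prodAssoc ν μ π).map_eq
        have s3 : Measure.map (Prod.map (id : (Fin t → S → S) → (Fin t → S → S))
              (fun z : (S → S) × S => z.1 z.2)) (ν.prod (μ.prod π)) = ν.prod π := by
          rw [← Measure.map_prod_map _ _ measurable_id hev, Measure.map_id, hπ]
        rw [hL1,
          ← Measure.map_map (measurable_id.prodMap hev)
            (MeasurableEquiv.prodAssoc.measurable.comp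
              (measurable_swap.prodMap measurable_id)),
          ← Measure.map_map MeasurableEquiv.prodAssoc.measurable
            (measurable_swap.prodMap measurable_id),
          s1, s2, s3]
      rw [hKL, ← Measure.map_map Measurable.of_discrete hLmeas, hLmap, ih]
  have hvec : Measurable (fun ω (i : Fin t) => f ((i : ℕ) + 1) ω) :=
    measurable_pi_iff.2 fun i => hmeas _
  have hg : Function.Injective (fun i : Fin t => (i : ℕ) + 1) := by
    intro a b h
    exact Fin.ext (Nat.succ_injective h)
  have hcomp : (fun p : Ω × S => bwdComp f t p.1 p.2)
      = (fun q : (Fin t → S → S) × S => phiB t q.1 q.2)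
        ∘ Prod.map (fun ω (i : Fin t) => f ((i : ℕ) + 1) ω) id := by
    funext p
    simp only [Function.comp_apply, Prod.map_fst, Prod.map_snd, id_eq]
    rw [bwdComp_eq_phiB]
  rw [hcomp, ← Measure.map_map Measurable.of_discrete (hvec.prodMap measurable_id),
    ← Measure.map_prod_map _ _ hvec measurable_id, Measure.map_id,
    map_vec_eq_pi f hmeas hindep hident t _ hg, key t]

end Measure

/-- Correctness of coupling from the past: if the i.i.d. random maps
preserve `π`, and almost surely some forward composition `f t ∘ ⋯ ∘ f 1` is constant,
then for any fixed `x₀ ∈ S` the almost-sure limit `W = lim_t (f 1 ∘ ⋯ ∘ f t) x₀`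
has law `π`. -/
theorem stmt3 [MeasureSpace Ω] [IsProbabilityMeasure (ℙ : Measure Ω)]
    [Fintype S] [Nonempty S] [MeasurableSpace S] [MeasurableSingletonClass S]
    (f : ℕ → Ω → S → S) (hmeas : ∀ n, Measurable (f n))
    (hindep : iIndepFun f ℙ)
    (hident : ∀ n, IdentDistrib (f n) (f 1) ℙ ℙ)
    (π : Measure S) [IsProbabilityMeasure π]
    (hπ : PreservesMeasure (Measure.map (f 1) ℙ) π)
    (hcoal : ∀ᵐ ω ∂ℙ, ∃ t, 1 ≤ t ∧ IsConstMap S (fwdComp f t ω))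
    (x₀ : S) :
    ∃ W : Ω → S,
      (∀ᵐ ω ∂ℙ, ∀ᶠ t in atTop, bwdComp f t ω x₀ = W ω) ∧
      Measure.map W ℙ = π := by
  classical
  -- measurability of the compositions
  have hbwd_meas : ∀ t, Measurable (fun ω => bwdComp f t ω) := by
    intro t
    induction t with
    | zero => exact measurable_const
    | succ n ih =>
      have h : (fun ω => bwdComp f (n + 1) ω)
          = (fun p : (S → S) × (S → S) => p.1 ∘ p.2)
            ∘ (fun ω => (bwdComp f n ω, f (n + 1) ω)) := rfl
      rw [h]
      exact Measurable.of_discrete.comp (ih.prodMk (hmeas _))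
  -- the coalescence events
  set Cb : ℕ → Set Ω := fun t => {ω | IsConstMap S (bwdComp f t ω)} with hCb
  set Cf : ℕ → Set Ω := fun t => {ω | IsConstMap S (fwdComp f t ω)} with hCf
  have hCb_meas : ∀ t, MeasurableSet (Cb t) := fun t =>
    (hbwd_meas t) (MeasurableSet.of_discrete (s := {g : S → S | IsConstMap S g}))
  -- stabilization of backward compositions after coalescence
  have hstab : ∀ (ω) (n m : ℕ), n ≤ m → IsConstMap S (bwdComp f n ω) →
      bwdComp f m ω = bwdComp f n ω := by
    intro ω n m hnm hc
    induction m, hnm using Nat.le_induction with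
    | base => rfl
    | succ m hnm ih =>
      show bwdComp f m ω ∘ f (m + 1) ω = _
      rw [ih]
      obtain ⟨c, hc'⟩ := hc
      rw [hc']
      rfl
  have hCb_mono : Monotone Cb := by
    refine monotone_nat_of_le_succ fun n ω hω => ?_
    obtain ⟨c, hc⟩ := hω
    exact ⟨c, by show bwdComp f n ω ∘ f (n + 1) ω = _; rw [hc]; rfl⟩
  have hCf_mono : Monotone Cf := by
    refine monotone_nat_of_le_succ fun n ω hω => ?_
    obtain ⟨c, hc⟩ := hω
    refine ⟨f (n + 1) ω c, ?_⟩
    show f (n + 1) ω ∘ fwdComp f n ω = _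
    rw [hc]
    rfl
  -- equality of probabilities of forward and backward coalescence
  have hprob_eq : ∀ t, ℙ (Cf t) = ℙ (Cb t) := by
    intro t
    have hg1 : Function.Injective (fun i : Fin t => (i : ℕ) + 1) := fun a b h =>
      Fin.ext (Nat.succ_injective h)
    have hg2 : Function.Injective (fun i : Fin t => ((Fin.rev i : Fin t) : ℕ) + 1) := by
      intro a b h
      exact Fin.rev_injective (Fin.ext (Nat.succ_injective h))
    have hv1 : Measurable (fun ω (i : Fin t) => f ((i : ℕ) + 1) ω) :=
      measurable_pi_iff.2 fun i => hmeas _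
    have hv2 : Measurable (fun ω (i : Fin t) => f (((Fin.rev i : Fin t) : ℕ) + 1) ω) :=
      measurable_pi_iff.2 fun i => hmeas _
    have h1 : Cf t = (fun ω (i : Fin t) => f ((i : ℕ) + 1) ω)
        ⁻¹' {v | IsConstMap S (phiF t v)} := by
      ext ω
      simp only [hCf, Set.mem_setOf_eq, Set.mem_preimage]
      rw [fwdComp_eq_phiF]
    have h2 : Cb t = (fun ω (i : Fin t) => f (((Fin.rev i : Fin t) : ℕ) + 1) ω)
        ⁻¹' {v | IsConstMap S (phiF t v)} := by
      ext ω
      simp only [hCb, Set.mem_setOf_eq, Set.mem_preimage]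
      rw [bwdComp_eq_phiB]
      constructor
      · intro h
        rwa [show (fun i : Fin t => f (((Fin.rev i : Fin t) : ℕ) + 1) ω)
          = (fun i : Fin t => f ((i : ℕ) + 1) ω) ∘ Fin.rev from rfl, phiF_rev]
      · intro h
        rwa [show (fun i : Fin t => f (((Fin.rev i : Fin t) : ℕ) + 1) ω)
          = (fun i : Fin t => f ((i : ℕ) + 1) ω) ∘ Fin.rev from rfl, phiF_rev] at h
    rw [h1, h2, ← Measure.map_apply hv1 MeasurableSet.of_discrete,
      ← Measure.map_apply hv2 MeasurableSet.of_discrete,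
      map_vec_eq_pi f hmeas hindep hident t _ hg1,
      map_vec_eq_pi f hmeas hindep hident t _ hg2]
  -- probability of eventual coalescence is one
  have hCf_one : ℙ (⋃ t, Cf t) = 1 := by
    have h : ∀ᵐ ω ∂ℙ, ω ∈ ⋃ t, Cf t :=
      hcoal.mono fun ω ⟨t, _, h⟩ => Set.mem_iUnion.2 ⟨t, h⟩
    have h0 : ℙ (⋃ t, Cf t)ᶜ = 0 := MeasureTheory.ae_iff.1 h
    rw [← measure_univ (μ := (ℙ : Measure Ω))]
    exact measure_congr (MeasureTheory.ae_eq_univ.2 h0)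
  have hCb_tendsto : Tendsto (fun t => ℙ (Cb t)) atTop (𝓝 (ℙ (⋃ t, Cb t))) :=
    tendsto_measure_iUnion_atTop hCb_mono
  have hCf_tendsto : Tendsto (fun t => ℙ (Cf t)) atTop (𝓝 1) := by
    rw [← hCf_one]
    exact tendsto_measure_iUnion_atTop hCf_mono
  have hCb_one : ℙ (⋃ t, Cb t) = 1 := by
    refine tendsto_nhds_unique hCb_tendsto ?_
    have : (fun t => ℙ (Cb t)) = fun t => ℙ (Cf t) := funext fun t => (hprob_eq t).symm
    rw [this]
    exact hCf_tendsto
  have hCb_tendsto1 : Tendsto (fun t => ℙ (Cb t)) atTop (𝓝 1) := hCb_one ▸ hCb_tendsto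
  have hae : ∀ᵐ ω ∂ℙ, ∃ t, IsConstMap S (bwdComp f t ω) := by
    have h0 : ℙ (⋃ t, Cb t)ᶜ = 0 := by
      rw [prob_compl_eq_one_sub (MeasurableSet.iUnion hCb_meas), hCb_one, tsub_self]
    have h : ∀ᵐ ω ∂ℙ, ω ∈ ⋃ t, Cb t := by
      rw [MeasureTheory.ae_iff]
      exact h0
    exact h.mono fun ω hω => Set.mem_iUnion.1 hω
  -- definition of W
  set W : Ω → S := fun ω =>
    if h : ∃ t, IsConstMap S (bwdComp f t ω) then bwdComp f (Nat.find h) ω x₀ else x₀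
    with hW_def
  have hbe : ∀ n, Measurable (fun ω => bwdComp f n ω x₀) := fun n =>
    (measurable_pi_apply x₀).comp (hbwd_meas n)
  have hW : Measurable W := by
    refine measurable_to_countable' fun s => ?_
    have hset : W ⁻¹' {s} =
        (⋃ n, ((Cb n ∩ ⋂ k, ⋂ _ : k < n, (Cb k)ᶜ)
          ∩ (fun ω => bwdComp f n ω x₀) ⁻¹' {s}))
        ∪ ((⋂ n, (Cb n)ᶜ) ∩ {_ω : Ω | x₀ = s}) := by
      ext ω
      by_cases h : ∃ t, IsConstMap S (bwdComp f t ω)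
      · simp only [Set.mem_preimage, Set.mem_singleton_iff, hW_def, dif_pos h,
          Set.mem_union, Set.mem_iUnion, Set.mem_inter_iff, Set.mem_iInter,
          Set.mem_compl_iff, Set.mem_setOf_eq, hCb]
        constructor
        · intro hs
          exact Or.inl ⟨Nat.find h, ⟨Nat.find_spec h, fun k hk => Nat.find_min h hk⟩, hs⟩
        · rintro (⟨n, ⟨hn, hmin⟩, hs⟩ | ⟨hall, _⟩)
          · have hn' : n = Nat.find h :=
              le_antisymm ((Nat.le_find_iff h n).2 hmin) (Nat.find_min' h hn)
            rwa [← hn']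
          · exact absurd h (by push_neg; exact hall)
      · simp only [Set.mem_preimage, Set.mem_singleton_iff, hW_def, dif_neg h,
          Set.mem_union, Set.mem_iUnion, Set.mem_inter_iff, Set.mem_iInter,
          Set.mem_compl_iff, Set.mem_setOf_eq, hCb]
        push_neg at h
        constructor
        · intro hs
          exact Or.inr ⟨h, hs⟩
        · rintro (⟨n, ⟨hn, _⟩, _⟩ | ⟨_, hs⟩)
          · exact absurd hn (h n)
          · exact hs
    rw [hset]
    refine MeasurableSet.union ?_ ?_
    · refine MeasurableSet.iUnion fun n => ?_
      exact (((hCb_meas n).inter (MeasurableSet.iInter fun k =>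
        MeasurableSet.iInter fun _ => (hCb_meas k).compl)).inter
        ((hbe n) (measurableSet_singleton s)))
    · exact (MeasurableSet.iInter fun n => (hCb_meas n).compl).inter (MeasurableSet.const _)
  refine ⟨W, ?_, ?_⟩
  · -- eventual equality
    refine hae.mono fun ω h => ?_
    refine eventually_atTop.2 ⟨Nat.find h, fun t ht => ?_⟩
    have h1 : bwdComp f t ω = bwdComp f (Nat.find h) ω :=
      hstab ω _ t ht (Nat.find_spec h)
    simp only [hW_def, dif_pos h]
    rw [h1]
  · -- the law of W
    have hkey := map_bwd_pair f hmeas hindep hident π hπ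
    have hWf : Measurable fun p : Ω × S => W p.1 := hW.comp measurable_fst
    have hmap : Measure.map (fun p : Ω × S => W p.1) ((ℙ : Measure Ω).prod π)
        = Measure.map W ℙ := by
      rw [show (fun p : Ω × S => W p.1) = W ∘ Prod.fst from rfl,
        ← Measure.map_map hW measurable_fst, Measure.map_fst_prod, measure_univ, one_smul]
    rw [← hmap]
    refine Measure.ext_of_singleton fun s => ?_
    have hbt : ∀ t, Measurable (fun p : Ω × S => bwdComp f t p.1 p.2) := by
      intro t
      have h : (fun p : Ω × S => bwdComp f t p.1 p.2)
          = (fun q : (S → S) × S => q.1 q.2)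
            ∘ (fun p : Ω × S => (bwdComp f t p.1, p.2)) := rfl
      rw [h]
      exact Measurable.of_discrete.comp (((hbwd_meas t).comp measurable_fst).prodMk
        measurable_snd)
    -- on the coalesced event, W agrees with the backward composition
    have hWeq : ∀ (t) (p : Ω × S), p.1 ∈ Cb t → W p.1 = bwdComp f t p.1 p.2 := by
      intro t p hp
      have h : ∃ n, IsConstMap S (bwdComp f n p.1) := ⟨t, hp⟩
      have hft : Nat.find h ≤ t := Nat.find_min' h hp
      have heq : bwdComp f t p.1 = bwdComp f (Nat.find h) p.1 :=
        hstab p.1 _ t hft (Nat.find_spec h)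
      obtain ⟨c, hc⟩ := hp
      simp only [hW_def, dif_pos h]
      rw [← heq, hc]
      rfl
    have hπs : ∀ t, ((ℙ : Measure Ω).prod π)
        ((fun p : Ω × S => bwdComp f t p.1 p.2) ⁻¹' {s}) = π {s} := by
      intro t
      rw [← Measure.map_apply (hbt t) (measurableSet_singleton s), hkey t]
    have hcompl : ∀ t, ((ℙ : Measure Ω).prod π) ((Cb t ×ˢ Set.univ)ᶜ)
        = 1 - ℙ (Cb t) := by
      intro t
      rw [prob_compl_eq_one_sub ((hCb_meas t).prod MeasurableSet.univ),
        Measure.prod_prod, measure_univ, mul_one]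
    have hε : Tendsto (fun t => (1 : ENNReal) - ℙ (Cb t)) atTop (𝓝 0) := by
      have := ENNReal.Tendsto.sub (tendsto_const_nhds (x := (1 : ENNReal)))
        hCb_tendsto1 (Or.inl ENNReal.one_ne_top)
      simpa using this
    set q := ((ℙ : Measure Ω).prod π) ((fun p : Ω × S => W p.1) ⁻¹' {s}) with hq
    have hsub1 : ∀ t, ((fun p : Ω × S => W p.1) ⁻¹' {s})
        ⊆ ((fun p : Ω × S => bwdComp f t p.1 p.2) ⁻¹' {s}) ∪ (Cb t ×ˢ Set.univ)ᶜ := by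
      intro t p hp
      by_cases hc : p.1 ∈ Cb t
      · left
        simp only [Set.mem_preimage, Set.mem_singleton_iff] at hp ⊢
        rw [← hWeq t p hc]
        exact hp
      · right
        simp [hc]
    have hsub2 : ∀ t, ((fun p : Ω × S => bwdComp f t p.1 p.2) ⁻¹' {s})
        ⊆ ((fun p : Ω × S => W p.1) ⁻¹' {s}) ∪ (Cb t ×ˢ Set.univ)ᶜ := by
      intro t p hp
      by_cases hc : p.1 ∈ Cb t
      · left
        simp only [Set.mem_preimage, Set.mem_singleton_iff] at hp ⊢
        rw [hWeq t p hc]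
        exact hp
      · right
        simp [hc]
    have le1 : ∀ t, π {s} ≤ q + (1 - ℙ (Cb t)) := by
      intro t
      rw [← hπs t, ← hcompl t]
      exact (measure_mono (hsub2 t)).trans (measure_union_le _ _)
    have le2 : ∀ t, q ≤ π {s} + (1 - ℙ (Cb t)) := by
      intro t
      rw [← hπs t, ← hcompl t, hπs t, ← hπs t]
      exact (measure_mono (hsub1 t)).trans (measure_union_le _ _)
    have hlim1 : Tendsto (fun t => q + (1 - ℙ (Cb t))) atTop (𝓝 q) := by
      have := Tendsto.add (tendsto_const_nhds (x := q)) hε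
      simpa using this
    have hlim2 : Tendsto (fun t => π {s} + (1 - ℙ (Cb t))) atTop (𝓝 (π {s})) := by
      have := Tendsto.add (tendsto_const_nhds (x := π {s})) hε
      simpa using this
    rw [Measure.map_apply hWf (measurableSet_singleton s)]
    exact le_antisymm (ge_of_tendsto' hlim2 le2) (ge_of_tendsto' hlim1 le1)
end
end

section
/- (The interleaved composite map is coalescent with probability at least 1/2.) Let (f_n)_{n≥1} and (g_n)_{n≥1} be two independent i.i.d. sequences of random maps on S, with f_1 and g_1 identically distributed. Define coalescence times τ_f := inf{t ≥ 1 : f_t ∘ ⋯ ∘ f_1 is constant} and τ_g := inf{t ≥ 1 : g_t ∘ ⋯ ∘ g_1 is constant}, and assume τ_f (equivalently τ_g) is almost surely finite. Then the composite map f_{τ_g} ∘ f_{τ_g−1} ∘ ⋯ ∘ f_1 is a constant function with probability at least 1/2. -/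
open MeasureTheory ProbabilityTheory Filter
open scoped ENNReal

noncomputable section

variable {Ω S : Type*}

/-- The coalescence time `inf {t ≥ 1 : f t ∘ ⋯ ∘ f 1 is constant}`
(equal to `0` if there is no such `t`). -/
def coalTime (f : ℕ → Ω → S → S) (ω : Ω) : ℕ :=
  sInf {t | 1 ≤ t ∧ IsConstMap S (fwdComp f t ω)}

/-! ### Auxiliary lemmas -/

lemma sInf_eq_iff_of_one_le {s : Set ℕ} {n : ℕ} (hn : 1 ≤ n) :
    sInf s = n ↔ n ∈ s ∧ ∀ m < n, m ∉ s := by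
  constructor
  · intro h
    have hne : s.Nonempty := by
      by_contra hs
      rw [Set.not_nonempty_iff_eq_empty] at hs
      rw [hs, Nat.sInf_empty] at h
      omega
    subst h
    exact ⟨Nat.sInf_mem hne, fun m hm => Nat.notMem_of_lt_sInf hm⟩
  · rintro ⟨hns, hlt⟩
    refine le_antisymm (Nat.sInf_le hns) ?_
    by_contra hlt'
    push_neg at hlt'
    exact hlt _ hlt' (Nat.sInf_mem ⟨n, hns⟩)

lemma coalTime_eq_iff (f : ℕ → Ω → S → S) (ω : Ω) {n : ℕ} (hn : 1 ≤ n) :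
    coalTime f ω = n ↔ IsConstMap S (fwdComp f n ω) ∧
      ∀ m, 1 ≤ m → m < n → ¬ IsConstMap S (fwdComp f m ω) := by
  rw [coalTime, sInf_eq_iff_of_one_le hn]
  simp only [Set.mem_setOf_eq]
  constructor
  · rintro ⟨⟨_, hC⟩, h⟩
    exact ⟨hC, fun m h1 hm hc => h m hm ⟨h1, hc⟩⟩
  · rintro ⟨hC, h⟩
    exact ⟨⟨hn, hC⟩, fun m hm hmem => h m hmem.1 hm hmem.2⟩

lemma one_le_coalTime_iff (f : ℕ → Ω → S → S) (ω : Ω) :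
    1 ≤ coalTime f ω ↔ ∃ t, 1 ≤ t ∧ IsConstMap S (fwdComp f t ω) := by
  constructor
  · intro h
    by_contra hc
    have hempty : {t | 1 ≤ t ∧ IsConstMap S (fwdComp f t ω)} = ∅ := by
      rw [Set.eq_empty_iff_forall_notMem]
      intro t ht
      exact hc ⟨t, ht⟩
    rw [coalTime, hempty, Nat.sInf_empty] at h
    omega
  · rintro ⟨t, ht⟩
    have hne : {t | 1 ≤ t ∧ IsConstMap S (fwdComp f t ω)}.Nonempty := ⟨t, ht⟩
    exact (Nat.sInf_mem hne).1

lemma coalTime_isConst (f : ℕ → Ω → S → S) (ω : Ω) (h : 1 ≤ coalTime f ω) :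
    IsConstMap S (fwdComp f (coalTime f ω) ω) := by
  have hne : {t | 1 ≤ t ∧ IsConstMap S (fwdComp f t ω)}.Nonempty := by
    by_contra hc
    rw [Set.not_nonempty_iff_eq_empty] at hc
    rw [coalTime, hc, Nat.sInf_empty] at h
    omega
  exact (Nat.sInf_mem hne).2

lemma isConstMap_fwdComp_mono (f : ℕ → Ω → S → S) (ω : Ω) {s t : ℕ} (hst : s ≤ t)
    (h : IsConstMap S (fwdComp f s ω)) : IsConstMap S (fwdComp f t ω) := by
  induction t with
  | zero =>
    have : s = 0 := by omega
    subst this; exact h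
  | succ t ih =>
    rcases Nat.lt_or_ge s (t + 1) with h' | h'
    · obtain ⟨c, hc⟩ := ih (by omega)
      refine ⟨f (t + 1) ω c, ?_⟩
      show f (t + 1) ω ∘ fwdComp f t ω = _
      rw [hc]
      rfl
    · have : s = t + 1 := by omega
      subst this; exact h

/-- Embed a tuple of maps indexed by `Fin n` as a deterministic sequence of random maps
over the trivial sample space. -/
def embedTup (n : ℕ) (h : Fin n → S → S) : ℕ → Unit → S → S :=
  fun k _ => if hk : k - 1 < n then h ⟨k - 1, hk⟩ else id

lemma fwdComp_embedTup (f : ℕ → Ω → S → S) (n : ℕ) (ω : Ω) :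
    ∀ t, t ≤ n →
      fwdComp (embedTup n fun i : Fin n => f (↑i + 1) ω) t () = fwdComp f t ω := by
  intro t
  induction t with
  | zero => intro _; rfl
  | succ t ih =>
    intro ht
    show embedTup n _ (t + 1) () ∘ fwdComp _ t () = f (t + 1) ω ∘ fwdComp f t ω
    rw [ih (by omega)]
    have ht' : t + 1 - 1 < n := by omega
    simp only [embedTup, dif_pos ht']
    norm_num

lemma exists_const_embedTup_iff (f : ℕ → Ω → S → S) (n : ℕ) (ω : Ω) :
    (∃ t, 1 ≤ t ∧ t ≤ n ∧
        IsConstMap S (fwdComp (embedTup n fun i : Fin n => f (↑i + 1) ω) t ())) ↔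
      ∃ t, 1 ≤ t ∧ t ≤ n ∧ IsConstMap S (fwdComp f t ω) := by
  constructor <;> rintro ⟨t, h1, h2, h3⟩ <;> refine ⟨t, h1, h2, ?_⟩
  · rwa [fwdComp_embedTup f n ω t h2] at h3
  · rwa [fwdComp_embedTup f n ω t h2]

lemma coalTime_embedTup_iff (f : ℕ → Ω → S → S) (n : ℕ) (ω : Ω) (hn : 1 ≤ n) :
    coalTime (embedTup n fun i : Fin n => f (↑i + 1) ω) () = n ↔ coalTime f ω = n := by
  rw [coalTime_eq_iff _ _ hn, coalTime_eq_iff _ _ hn]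
  have key : ∀ t, t ≤ n →
      (IsConstMap S (fwdComp (embedTup n fun i : Fin n => f (↑i + 1) ω) t ()) ↔
        IsConstMap S (fwdComp f t ω)) := fun t ht => by
    rw [fwdComp_embedTup f n ω t ht]
  constructor <;> rintro ⟨h1, h2⟩
  · exact ⟨(key n le_rfl).1 h1, fun m hm1 hm2 hc =>
      h2 m hm1 hm2 ((key m (by omega)).2 hc)⟩
  · exact ⟨(key n le_rfl).2 h1, fun m hm1 hm2 hc =>
      h2 m hm1 hm2 ((key m (by omega)).1 hc)⟩

section Measurability

variable [MeasurableSpace Ω] [Fintype S] [MeasurableSpace S] [MeasurableSingletonClass S]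

lemma measurable_fwdComp (f : ℕ → Ω → S → S) (hf : ∀ n, Measurable (f n)) (n : ℕ) :
    Measurable (fwdComp f n) := by
  induction n with
  | zero => exact measurable_const
  | succ n ih =>
    have : fwdComp f (n + 1) =
        (fun p : (S → S) × (S → S) => p.1 ∘ p.2) ∘ fun ω => (f (n + 1) ω, fwdComp f n ω) := rfl
    rw [this]
    exact (measurable_of_countable _).comp ((hf (n + 1)).prodMk ih)

lemma measurableSet_isConst (f : ℕ → Ω → S → S) (hf : ∀ n, Measurable (f n)) (t : ℕ) :
    MeasurableSet {ω | IsConstMap S (fwdComp f t ω)} :=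
  measurable_fwdComp f hf t ((Set.to_countable {h : S → S | IsConstMap S h}).measurableSet)

lemma measurableSet_coalTime_eq (f : ℕ → Ω → S → S) (hf : ∀ n, Measurable (f n)) {n : ℕ}
    (hn : 1 ≤ n) : MeasurableSet {ω | coalTime f ω = n} := by
  have : {ω | coalTime f ω = n} =
      {ω | IsConstMap S (fwdComp f n ω)} ∩
        ⋂ m ∈ Finset.range n, {ω | ¬ (1 ≤ m ∧ IsConstMap S (fwdComp f m ω))} := by
    ext ω
    simp only [Set.mem_setOf_eq, Set.mem_inter_iff, Set.mem_iInter, Finset.mem_range,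
      coalTime_eq_iff f ω hn]
    constructor
    · rintro ⟨h1, h2⟩
      exact ⟨h1, fun m hm ⟨hm1, hmc⟩ => h2 m hm1 hm hmc⟩
    · rintro ⟨h1, h2⟩
      exact ⟨h1, fun m hm1 hm hmc => h2 m hm ⟨hm1, hmc⟩⟩
  rw [this]
  refine (measurableSet_isConst f hf n).inter (MeasurableSet.biInter (Set.to_countable _)
    fun m _ => ?_)
  by_cases hm : 1 ≤ m
  · have : {ω | ¬ (1 ≤ m ∧ IsConstMap S (fwdComp f m ω))} =
        {ω | IsConstMap S (fwdComp f m ω)}ᶜ := by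
      ext ω; simp [hm]
    rw [this]
    exact (measurableSet_isConst f hf m).compl
  · simp [hm]

end Measurability

/-- Reindexing an independent family along an injective map. -/
lemma iIndepFun_reindex {ι κ : Type*} [MeasurableSpace Ω] {μ : Measure Ω} {β : Type*}
    [mβ : MeasurableSpace β] {h : ι → Ω → β} (e : κ → ι) (hinj : Function.Injective e)
    (hi : iIndepFun h μ) : iIndepFun (fun k => h (e k)) μ := by
  classical
  rw [iIndepFun_iff_measure_inter_preimage_eq_mul] at hi ⊢
  intro s sets hsets
  have hmeas : ∀ j, j ∈ s.image e →
      MeasurableSet (Function.extend e sets (fun _ => Set.univ) j) := by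
    intro j hj
    rcases Finset.mem_image.mp hj with ⟨k, hk, rfl⟩
    rw [hinj.extend_apply]
    exact hsets k hk
  have key := hi (s.image e) hmeas
  have h1 : (⋂ j ∈ s.image e, h j ⁻¹' Function.extend e sets (fun _ => Set.univ) j) =
      ⋂ k ∈ s, h (e k) ⁻¹' sets k := by
    rw [Finset.set_biInter_finset_image]
    exact Set.iInter₂_congr fun k _ => by rw [hinj.extend_apply]
  have h2 : (∏ j ∈ s.image e, μ (h j ⁻¹' Function.extend e sets (fun _ => Set.univ) j)) =
      ∏ k ∈ s, μ (h (e k) ⁻¹' sets k) := by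
    rw [Finset.prod_image fun a _ b _ hab => hinj hab]
    exact Finset.prod_congr rfl fun k _ => by rw [hinj.extend_apply]
  rw [h1, h2] at key
  exact key

/-- The key arithmetic fact: if `q` is a probability mass function on `ℕ`, then
`∑ₙ (∑_{m ≤ n} q m) * q n ≥ 1/2`. -/
lemma half_le_tsum_triangle (q : ℕ → ℝ≥0∞) (hq : ∑' n, q n = 1) :
    (1 : ℝ≥0∞) / 2 ≤ ∑' n, (∑ m ∈ Finset.range (n + 1), q m) * q n := by
  set K := ∑' n, (∑ m ∈ Finset.range (n + 1), q m) * q n with hKdef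
  have hK : K = ∑' n, ∑' m, (if m ≤ n then q m * q n else 0) := by
    refine tsum_congr fun n => ?_
    rw [Finset.sum_mul, tsum_eq_sum (s := Finset.range (n + 1))
      (fun m hm => if_neg (by simp at hm; omega))]
    exact (Finset.sum_congr rfl fun m hm => by
      rw [if_pos (by simp at hm; omega)]).symm
  have hswap : (∑' n, ∑' m, (if m ≤ n then q m * q n else 0)) =
      ∑' n, ∑' m, (if n ≤ m then q m * q n else 0) := by
    rw [ENNReal.tsum_comm]
    refine tsum_congr fun a => tsum_congr fun b => ?_
    split_ifs with h
    · rw [mul_comm]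
    · rfl
  have h1 : (1 : ℝ≥0∞) = ∑' n, ∑' m, q m * q n := by
    calc (1 : ℝ≥0∞) = ∑' n, q n := hq.symm
      _ = ∑' n, ∑' m, q m * q n :=
        tsum_congr fun n => by rw [ENNReal.tsum_mul_right, hq, one_mul]
  have hKK : 1 ≤ K + K := by
    calc (1 : ℝ≥0∞) = ∑' n, ∑' m, q m * q n := h1
      _ ≤ ∑' n, ∑' m, ((if m ≤ n then q m * q n else 0) + (if n ≤ m then q m * q n else 0)) := by
          refine ENNReal.tsum_le_tsum fun n => ENNReal.tsum_le_tsum fun m => ?_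
          rcases le_total m n with h | h
          · calc q m * q n = (if m ≤ n then q m * q n else 0) := (if_pos h).symm
              _ ≤ _ := le_self_add
          · calc q m * q n = (if n ≤ m then q m * q n else 0) := (if_pos h).symm
              _ ≤ _ := le_add_self
      _ = (∑' n, ∑' m, (if m ≤ n then q m * q n else 0)) +
            ∑' n, ∑' m, (if n ≤ m then q m * q n else 0) := by
          simp [ENNReal.tsum_add]
      _ = K + K := by rw [← hK, ← hswap, ← hK]
  rw [ENNReal.div_le_iff (by norm_num) (by norm_num)]
  calc (1 : ℝ≥0∞) ≤ K + K := hKK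
    _ = K * 2 := by ring

/-- The interleaved composite map is coalescent with probability at
least 1/2: for two independent i.i.d. sequences of random maps `(f n)` and `(g n)`,
with `f 1` and `g 1` identically distributed and almost surely finite coalescence time
`τ_f` (equivalently `τ_g`), the composite map `f τ_g ∘ f (τ_g - 1) ∘ ⋯ ∘ f 1` is a
constant function with probability at least 1/2. -/
theorem stmt10 [MeasureSpace Ω] [IsProbabilityMeasure (ℙ : Measure Ω)]
    [Fintype S] [Nonempty S] [MeasurableSpace S] [MeasurableSingletonClass S]
    (f g : ℕ → Ω → S → S)
    (hmeasf : ∀ n, Measurable (f n)) (hmeasg : ∀ n, Measurable (g n))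
    (hindep : iIndepFun (fun i : ℕ ⊕ ℕ => Sum.elim f g i) ℙ)
    (hident : ∀ i : ℕ ⊕ ℕ, IdentDistrib (Sum.elim f g i) (f 1) ℙ ℙ)
    (hfin : ∀ᵐ ω ∂ℙ, ∃ t, 1 ≤ t ∧ IsConstMap S (fwdComp f t ω)) :
    (1 : ℝ≥0∞) / 2 ≤ ℙ {ω | IsConstMap S (fwdComp f (coalTime g ω) ω)} := by
  classical
  -- measurability of the tuple maps
  have hVf : ∀ n : ℕ, Measurable (fun ω (i : Fin n) => f (↑i + 1) ω) :=
    fun n => measurable_pi_lambda _ fun i => hmeasf _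
  have hVg : ∀ n : ℕ, Measurable (fun ω (i : Fin n) => g (↑i + 1) ω) :=
    fun n => measurable_pi_lambda _ fun i => hmeasg _
  -- the laws of the corresponding finite tuples of `f`'s and `g`'s agree
  have hmapeq : ∀ n : ℕ, Measure.map (fun ω (i : Fin n) => f (↑i + 1) ω) ℙ =
      Measure.map (fun ω (i : Fin n) => g (↑i + 1) ω) ℙ := by
    intro n
    refine Measure.ext_of_singleton fun h => ?_
    rw [Measure.map_apply (hVf n) (measurableSet_singleton h),
        Measure.map_apply (hVg n) (measurableSet_singleton h)]
    have hpre : ∀ u : ℕ → Ω → S → S,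
        ((fun ω (i : Fin n) => u (↑i + 1) ω) ⁻¹' {h}) =
          ⋂ i ∈ Finset.univ, u (↑i + 1) ⁻¹' {h i} := by
      intro u; ext ω
      simp [funext_iff]
    have hif : iIndepFun
        (fun i : Fin n => f (↑i + 1)) ℙ := by
      have := iIndepFun_reindex (fun i : Fin n => (Sum.inl (↑i + 1) : ℕ ⊕ ℕ))
        (fun a b hab => Fin.ext (by simpa using hab)) hindep
      exact this
    have hig : iIndepFun
        (fun i : Fin n => g (↑i + 1)) ℙ := by
      have := iIndepFun_reindex (fun i : Fin n => (Sum.inr (↑i + 1) : ℕ ⊕ ℕ))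
        (fun a b hab => Fin.ext (by simpa using hab)) hindep
      exact this
    have keyf := hif.measure_inter_preimage_eq_mul Finset.univ
      (sets := fun i => ({h i} : Set (S → S))) (fun i _ => measurableSet_singleton (h i))
    have keyg := hig.measure_inter_preimage_eq_mul Finset.univ
      (sets := fun i => ({h i} : Set (S → S))) (fun i _ => measurableSet_singleton (h i))
    rw [hpre f, hpre g, keyf, keyg]
    refine Finset.prod_congr rfl fun i _ => ?_
    have h1 : ℙ (f (↑i + 1) ⁻¹' {h i}) = (Measure.map (f 1) ℙ) {h i} := by
      rw [← Measure.map_apply (hmeasf _) (measurableSet_singleton _)]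
      have hid := (hident (Sum.inl (↑i + 1))).map_eq
      simp only [Sum.elim_inl] at hid
      exact congrArg (fun μ : Measure (S → S) => μ {h i}) hid
    have h2 : ℙ (g (↑i + 1) ⁻¹' {h i}) = (Measure.map (f 1) ℙ) {h i} := by
      rw [← Measure.map_apply (hmeasg _) (measurableSet_singleton _)]
      have hid := (hident (Sum.inr (↑i + 1))).map_eq
      simp only [Sum.elim_inr] at hid
      exact congrArg (fun μ : Measure (S → S) => μ {h i}) hid
    rw [h1, h2]
  -- the coalescence times of `f` and `g` are identically distributed
  have hq : ∀ n : ℕ, ℙ {ω | coalTime g ω = n + 1} = ℙ {ω | coalTime f ω = n + 1} := by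
    intro n
    have hD : MeasurableSet
        {h : Fin (n + 1) → S → S | coalTime (embedTup (n + 1) h) () = n + 1} :=
      (Set.to_countable _).measurableSet
    have hsetf : {ω | coalTime f ω = n + 1} = (fun ω (i : Fin (n + 1)) => f (↑i + 1) ω) ⁻¹'
        {h | coalTime (embedTup (n + 1) h) () = n + 1} := by
      ext ω
      simp only [Set.mem_setOf_eq, Set.mem_preimage]
      exact (coalTime_embedTup_iff f (n + 1) ω (by omega)).symm
    have hsetg : {ω | coalTime g ω = n + 1} = (fun ω (i : Fin (n + 1)) => g (↑i + 1) ω) ⁻¹'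
        {h | coalTime (embedTup (n + 1) h) () = n + 1} := by
      ext ω
      simp only [Set.mem_setOf_eq, Set.mem_preimage]
      exact (coalTime_embedTup_iff g (n + 1) ω (by omega)).symm
    rw [hsetf, hsetg, ← Measure.map_apply (hVf _) hD, ← Measure.map_apply (hVg _) hD,
      hmapeq (n + 1)]
  -- the events `A n` : coalescence of `f` happens at some time in `[1, n]`
  set A : ℕ → Set Ω := fun n => {ω | ∃ t, 1 ≤ t ∧ t ≤ n ∧ IsConstMap S (fwdComp f t ω)}
    with hA
  have hAmeas : ∀ n, MeasurableSet (A n) := by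
    intro n
    have : A n = ⋃ t ∈ Finset.Icc 1 n, {ω | IsConstMap S (fwdComp f t ω)} := by
      ext ω
      simp [hA, Finset.mem_Icc, and_assoc]
    rw [this]
    exact MeasurableSet.iUnion fun t => MeasurableSet.iUnion fun _ =>
      measurableSet_isConst f hmeasf t
  have hAq : ∀ n, ℙ (A n) = ∑ m ∈ Finset.range n, ℙ {ω | coalTime f ω = m + 1} := by
    intro n
    have hAeq : A n = ⋃ m ∈ Finset.range n, {ω | coalTime f ω = m + 1} := by
      ext ω
      simp only [hA, Set.mem_setOf_eq, Set.mem_iUnion, Finset.mem_range, exists_prop]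
      constructor
      · rintro ⟨t, h1, h2, h3⟩
        have hτ1 : 1 ≤ coalTime f ω := (one_le_coalTime_iff f ω).2 ⟨t, h1, h3⟩
        have hτ2 : coalTime f ω ≤ t := Nat.sInf_le ⟨h1, h3⟩
        exact ⟨coalTime f ω - 1, by omega, by omega⟩
      · rintro ⟨m, hm, hτ⟩
        refine ⟨m + 1, by omega, by omega, ?_⟩
        rw [← hτ]
        exact coalTime_isConst f ω (by omega)
    rw [hAeq, measure_biUnion_finset ?_ fun m _ => measurableSet_coalTime_eq f hmeasf (by omega)]
    intro a _ b _ hab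
    rw [Function.onFun, Set.disjoint_left]
    intro ω h1 h2
    simp only [Set.mem_setOf_eq] at h1 h2
    exact hab (by omega)
  -- the total mass of the coalescence time of `f` is 1
  have hsum1 : (∑' m, ℙ {ω | coalTime f ω = m + 1}) = 1 := by
    have hU : (⋃ m, {ω | coalTime f ω = m + 1}) = {ω | 1 ≤ coalTime f ω} := by
      ext ω
      simp only [Set.mem_iUnion, Set.mem_setOf_eq]
      constructor
      · rintro ⟨m, hm⟩; omega
      · intro h; exact ⟨coalTime f ω - 1, by omega⟩
    have hdisj : Pairwise (Function.onFun Disjoint fun m => {ω | coalTime f ω = m + 1}) := by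
      intro a b hab
      rw [Function.onFun, Set.disjoint_left]
      intro ω h1 h2
      simp only [Set.mem_setOf_eq] at h1 h2
      exact hab (by omega)
    have hone : ℙ {ω | 1 ≤ coalTime f ω} = 1 := by
      have hae : ∀ᵐ ω ∂ℙ, 1 ≤ coalTime f ω :=
        hfin.mono fun ω h => (one_le_coalTime_iff f ω).2 h
      have hms : MeasurableSet {ω | 1 ≤ coalTime f ω} := by
        rw [← hU]
        exact MeasurableSet.iUnion fun m => measurableSet_coalTime_eq f hmeasf (by omega)
      rw [← prob_compl_eq_zero_iff hms, Set.compl_setOf]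
      simpa using ae_iff.mp hae
    calc (∑' m, ℙ {ω | coalTime f ω = m + 1})
        = ℙ (⋃ m, {ω | coalTime f ω = m + 1}) :=
          (measure_iUnion hdisj fun m => measurableSet_coalTime_eq f hmeasf (by omega)).symm
      _ = 1 := by rw [hU, hone]
  -- independence of `A (n+1)` and `{coalTime g = n+1}`
  have hind : ∀ n : ℕ, ℙ (A (n + 1) ∩ {ω | coalTime g ω = n + 1}) =
      ℙ (A (n + 1)) * ℙ {ω | coalTime g ω = n + 1} := by
    intro n
    have hdisjST : Disjoint
        (Finset.univ.image (fun i : Fin (n + 1) => (Sum.inl (↑i + 1) : ℕ ⊕ ℕ)))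
        (Finset.univ.image (fun i : Fin (n + 1) => (Sum.inr (↑i + 1) : ℕ ⊕ ℕ))) := by
      rw [Finset.disjoint_left]
      intro a ha hb
      simp only [Finset.mem_image, Finset.mem_univ, true_and] at ha hb
      obtain ⟨i, rfl⟩ := ha
      obtain ⟨j, hj⟩ := hb
      exact absurd hj (by simp)
    have hmeasElim : ∀ i : ℕ ⊕ ℕ, Measurable (Sum.elim f g i) := by
      intro i
      cases i with
      | inl k => exact hmeasf k
      | inr k => exact hmeasg k
    have hIF := hindep.indepFun_finset _ _ hdisjST hmeasElim
    have hmemf : ∀ i : Fin (n + 1), (Sum.inl (↑i + 1) : ℕ ⊕ ℕ) ∈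
        Finset.univ.image (fun i : Fin (n + 1) => (Sum.inl (↑i + 1) : ℕ ⊕ ℕ)) :=
      fun i => Finset.mem_image_of_mem _ (Finset.mem_univ i)
    have hmemg : ∀ i : Fin (n + 1), (Sum.inr (↑i + 1) : ℕ ⊕ ℕ) ∈
        Finset.univ.image (fun i : Fin (n + 1) => (Sum.inr (↑i + 1) : ℕ ⊕ ℕ)) :=
      fun i => Finset.mem_image_of_mem _ (Finset.mem_univ i)
    have hIF2 : IndepFun (fun ω (i : Fin (n + 1)) => f (↑i + 1) ω)
        (fun ω (i : Fin (n + 1)) => g (↑i + 1) ω) ℙ := by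
      have := hIF.comp
        (φ := fun v => fun i : Fin (n + 1) => v ⟨_, hmemf i⟩)
        (ψ := fun v => fun i : Fin (n + 1) => v ⟨_, hmemg i⟩)
        (measurable_of_countable _) (measurable_of_countable _)
      exact this
    have hCa : MeasurableSet {h : Fin (n + 1) → S → S |
        ∃ t, 1 ≤ t ∧ t ≤ n + 1 ∧ IsConstMap S (fwdComp (embedTup (n + 1) h) t ())} :=
      (Set.to_countable _).measurableSet
    have hDb : MeasurableSet
        {h : Fin (n + 1) → S → S | coalTime (embedTup (n + 1) h) () = n + 1} :=
      (Set.to_countable _).measurableSet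
    have hAface : A (n + 1) = (fun ω (i : Fin (n + 1)) => f (↑i + 1) ω) ⁻¹' {h |
        ∃ t, 1 ≤ t ∧ t ≤ n + 1 ∧ IsConstMap S (fwdComp (embedTup (n + 1) h) t ())} := by
      ext ω
      simp only [hA, Set.mem_setOf_eq, Set.mem_preimage]
      exact (exists_const_embedTup_iff f (n + 1) ω).symm
    have hBg : {ω | coalTime g ω = n + 1} = (fun ω (i : Fin (n + 1)) => g (↑i + 1) ω) ⁻¹'
        {h | coalTime (embedTup (n + 1) h) () = n + 1} := by
      ext ω
      simp only [Set.mem_setOf_eq, Set.mem_preimage]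
      exact (coalTime_embedTup_iff g (n + 1) ω (by omega)).symm
    rw [hAface, hBg]
    exact hIF2.measure_inter_preimage_eq_mul _ _ hCa hDb
  -- putting everything together
  have main : (∑' n, (∑ m ∈ Finset.range (n + 1), ℙ {ω | coalTime f ω = m + 1}) *
      ℙ {ω | coalTime f ω = n + 1}) ≤
      ℙ {ω | IsConstMap S (fwdComp f (coalTime g ω) ω)} := by
    have hsub : (⋃ n, A (n + 1) ∩ {ω | coalTime g ω = n + 1}) ⊆
        {ω | IsConstMap S (fwdComp f (coalTime g ω) ω)} := by
      intro ω hω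
      simp only [hA, Set.mem_iUnion, Set.mem_inter_iff, Set.mem_setOf_eq] at hω
      obtain ⟨n, ⟨t, h1, h2, h3⟩, hg'⟩ := hω
      exact isConstMap_fwdComp_mono f ω (show t ≤ coalTime g ω by omega) h3
    have hdisj2 : Pairwise (Function.onFun Disjoint
        fun n => A (n + 1) ∩ {ω | coalTime g ω = n + 1}) := by
      intro a b hab
      rw [Function.onFun, Set.disjoint_left]
      intro ω h1 h2
      simp only [Set.mem_inter_iff, Set.mem_setOf_eq] at h1 h2
      exact hab (by omega)
    have hmeas2 : ∀ n : ℕ, MeasurableSet (A (n + 1) ∩ {ω | coalTime g ω = n + 1}) :=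
      fun n => (hAmeas (n + 1)).inter (measurableSet_coalTime_eq g hmeasg (by omega))
    calc (∑' n, (∑ m ∈ Finset.range (n + 1), ℙ {ω | coalTime f ω = m + 1}) *
        ℙ {ω | coalTime f ω = n + 1})
        = ∑' n, ℙ (A (n + 1) ∩ {ω | coalTime g ω = n + 1}) := by
          refine tsum_congr fun n => ?_
          rw [hind n, hAq (n + 1), hq n]
      _ = ℙ (⋃ n, A (n + 1) ∩ {ω | coalTime g ω = n + 1}) :=
          (measure_iUnion hdisj2 hmeas2).symm
      _ ≤ ℙ {ω | IsConstMap S (fwdComp f (coalTime g ω) ω)} := measure_mono hsub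
  exact le_trans
    (half_le_tsum_triangle (fun m => ℙ {ω | coalTime f ω = m + 1}) hsum1) main
end
end

section
/- (Submultiplicativity of coalescence tails.) Define the coalescence time τ := inf{t ≥ 1 : f_t ∘ ⋯ ∘ f_1 is a constant function} (with τ = ∞ if no such t exists). Then for all integers s, t ≥ 1, P(τ > s + t) ≤ P(τ > s) · P(τ > t). -/
open MeasureTheory ProbabilityTheory Filter
open scoped ENNReal

noncomputable section

variable {Ω S : Type*}

/-- The coalescence time `τ := inf {t ≥ 1 : f t ∘ ⋯ ∘ f 1 is constant}`, with
`τ = ∞` (i.e. `⊤ : ℕ∞`) if there is no such `t`. -/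
def coalTimeE (f : ℕ → Ω → S → S) (ω : Ω) : ℕ∞ :=
  sInf ((fun n : ℕ => (n : ℕ∞)) '' {n | 1 ≤ n ∧ IsConstMap S (fwdComp f n ω)})

lemma fwdComp_const_mono {f : ℕ → Ω → S → S} {ω : Ω} {n m : ℕ} (h : n ≤ m)
    (hc : IsConstMap S (fwdComp f n ω)) : IsConstMap S (fwdComp f m ω) := by
  induction m, h using Nat.le_induction with
  | base => exact hc
  | succ m hm ih =>
    obtain ⟨c, hc'⟩ := ih
    exact ⟨f (m + 1) ω c, by funext x; simp [fwdComp, hc', Function.const]⟩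

lemma lt_coalTimeE_iff {f : ℕ → Ω → S → S} {ω : Ω} {n : ℕ} (hn : 1 ≤ n) :
    (n : ℕ∞) < coalTimeE f ω ↔ ¬ IsConstMap S (fwdComp f n ω) := by
  constructor
  · intro h hc
    have : coalTimeE f ω ≤ (n : ℕ∞) := sInf_le ⟨n, ⟨hn, hc⟩, rfl⟩
    exact absurd (h.trans_le this) (lt_irrefl _)
  · intro h
    have h1 : ((n + 1 : ℕ) : ℕ∞) ≤ coalTimeE f ω := by
      apply le_sInf
      rintro _ ⟨k, ⟨hk1, hkc⟩, rfl⟩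
      by_contra hlt
      push_neg at hlt
      have hk : k ≤ n := by
        have : (k : ℕ∞) < ((n + 1 : ℕ) : ℕ∞) := hlt
        have : k < n + 1 := by exact_mod_cast this
        omega
      exact h (fwdComp_const_mono hk hkc)
    have h2 : (n : ℕ∞) < ((n + 1 : ℕ) : ℕ∞) := by exact_mod_cast Nat.lt_succ_self n
    exact h2.trans_le h1

lemma fwdComp_congr {Ω' : Type*} {f : ℕ → Ω → S → S} {g : ℕ → Ω' → S → S} {ω : Ω} {ω' : Ω'} :
    ∀ {n : ℕ}, (∀ k, 1 ≤ k → k ≤ n → f k ω = g k ω') → fwdComp f n ω = fwdComp g n ω'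
  | 0, _ => rfl
  | n + 1, h => by
    simp only [fwdComp]
    rw [fwdComp_congr (fun k h1 h2 => h k h1 (h2.trans (Nat.le_succ n))),
      h (n + 1) (Nat.succ_le_succ (Nat.zero_le n)) le_rfl]

lemma fwdComp_add {f : ℕ → Ω → S → S} {ω : Ω} (s : ℕ) :
    ∀ t : ℕ, fwdComp f (s + t) ω = (fwdComp (fun i => f (s + i)) t ω) ∘ fwdComp f s ω
  | 0 => by simp [fwdComp]
  | t + 1 => by
    show fwdComp f ((s + t) + 1) ω = _
    simp only [fwdComp]
    rw [fwdComp_add s t]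
    rfl

/-- Pure composer: composes a `Fin t`-tuple of maps in increasing index order. -/
def tupleComp [Fintype S] (t : ℕ) (g : Fin t → S → S) : S → S :=
  fwdComp (fun k (h : Fin t → S → S) => if hk : k - 1 < t then h ⟨k - 1, hk⟩ else id) t g

lemma fwdComp_eq_tupleComp [Fintype S] {f : ℕ → Ω → S → S} {ω : Ω} (a t : ℕ) :
    fwdComp (fun i => f (a + i)) t ω = tupleComp t (fun i : Fin t => f (a + 1 + (i : ℕ)) ω) := by
  apply fwdComp_congr
  intro k h1 h2
  have hk : k - 1 < t := by omega
  show f (a + k) ω = if hk : k - 1 < t then f (a + 1 + (k - 1)) ω else id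
  rw [dif_pos hk]
  show f (a + k) ω = f (a + 1 + (k - 1)) ω
  have : a + k = a + 1 + (k - 1) := by omega
  rw [this]

lemma tuple_singleton_prob [MeasureSpace Ω] [IsProbabilityMeasure (ℙ : Measure Ω)]
    [Fintype S] [MeasurableSpace S] [MeasurableSingletonClass S]
    {f : ℕ → Ω → S → S} (hmeas : ∀ n, Measurable (f n))
    (hindep : iIndepFun f ℙ)
    (hident : ∀ n, IdentDistrib (f n) (f 1) ℙ ℙ)
    (a t : ℕ) (g : Fin t → S → S) :
    ℙ ((fun ω (i : Fin t) => f (a + 1 + (i : ℕ)) ω) ⁻¹' {g})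
      = ∏ i : Fin t, ℙ (f 1 ⁻¹' {g i}) := by
  classical
  set sets : ℕ → Set (S → S) := fun k => {h | ∀ i : Fin t, k = a + 1 + (i : ℕ) → h = g i}
    with hsets
  have hpre : (fun ω (i : Fin t) => f (a + 1 + (i : ℕ)) ω) ⁻¹' {g}
      = ⋂ k ∈ Finset.Icc (a + 1) (a + t), f k ⁻¹' sets k := by
    ext ω
    simp only [Set.mem_preimage, Set.mem_singleton_iff, Set.mem_iInter, hsets,
      Set.mem_setOf_eq]
    constructor
    · intro hω k _ i hi
      subst hi
      exact congrFun hω i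
    · intro hω
      funext i
      have hk : a + 1 + (i : ℕ) ∈ Finset.Icc (a + 1) (a + t) := by
        have := i.isLt
        simp only [Finset.mem_Icc]
        omega
      exact hω _ hk i rfl
  rw [hpre, hindep.measure_inter_preimage_eq_mul _
    (fun k _ => (Set.to_countable _).measurableSet)]
  refine Finset.prod_bij
    (fun k hk => (⟨k - (a + 1), by simp only [Finset.mem_Icc] at hk; omega⟩ : Fin t))
    (fun _ _ => Finset.mem_univ _) ?_ ?_ ?_
  · intro k hk k' hk' h
    simp only [Fin.mk.injEq] at h
    simp only [Finset.mem_Icc] at hk hk'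
    omega
  · intro i _
    refine ⟨a + 1 + (i : ℕ), by simp only [Finset.mem_Icc]; have := i.isLt; omega, ?_⟩
    ext
    simp only
    omega
  · intro k hk
    simp only [Finset.mem_Icc] at hk
    have hke : sets k = {g ⟨k - (a + 1), by omega⟩} := by
      ext h
      simp only [hsets, Set.mem_setOf_eq, Set.mem_singleton_iff]
      constructor
      · intro hh
        exact hh ⟨k - (a + 1), by omega⟩ (by simp only; omega)
      · intro hh i hi
        have hival : (i : ℕ) = k - (a + 1) := by omega
        have hieq : i = (⟨k - (a + 1), by omega⟩ : Fin t) := Fin.ext hival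
        rw [hieq]
        exact hh
    rw [hke]
    exact (hident k).measure_mem_eq (measurableSet_singleton _)

lemma tuple_prob_eq [MeasureSpace Ω] [IsProbabilityMeasure (ℙ : Measure Ω)]
    [Fintype S] [MeasurableSpace S] [MeasurableSingletonClass S]
    {f : ℕ → Ω → S → S} (hmeas : ∀ n, Measurable (f n))
    (hindep : iIndepFun f ℙ)
    (hident : ∀ n, IdentDistrib (f n) (f 1) ℙ ℙ)
    (a b t : ℕ) (C : Set (Fin t → S → S)) :
    ℙ ((fun ω (i : Fin t) => f (a + 1 + (i : ℕ)) ω) ⁻¹' C)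
      = ℙ ((fun ω (i : Fin t) => f (b + 1 + (i : ℕ)) ω) ⁻¹' C) := by
  classical
  have key : ∀ c : ℕ, ℙ ((fun ω (i : Fin t) => f (c + 1 + (i : ℕ)) ω) ⁻¹' C)
      = ∑ g ∈ C.toFinite.toFinset, ∏ i : Fin t, ℙ (f 1 ⁻¹' {g i}) := by
    intro c
    have hdecomp : (fun ω (i : Fin t) => f (c + 1 + (i : ℕ)) ω) ⁻¹' C
        = ⋃ g ∈ C.toFinite.toFinset,
            (fun ω (i : Fin t) => f (c + 1 + (i : ℕ)) ω) ⁻¹' {g} := by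
      ext ω
      simp only [Set.mem_preimage, Set.mem_iUnion, Set.Finite.mem_toFinset,
        Set.mem_singleton_iff, exists_prop, exists_eq_right']
    rw [hdecomp, measure_biUnion_finset ?_ ?_]
    · exact Finset.sum_congr rfl fun g _ => tuple_singleton_prob hmeas hindep hident c t g
    · intro g _ g' _ hgg'
      simp only [Function.onFun]
      rw [Set.disjoint_left]
      intro ω h1 h2
      simp only [Set.mem_preimage, Set.mem_singleton_iff] at h1 h2
      exact hgg' (h1.symm.trans h2)
    · intro g _
      exact (measurable_pi_lambda _ fun i => hmeas _) (measurableSet_singleton _)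
  rw [key a, key b]

/-- Submultiplicativity of coalescence tails: for the coalescence
time `τ` of an i.i.d. sequence of random maps, `P(τ > s+t) ≤ P(τ > s) * P(τ > t)`
for all integers `s, t ≥ 1`. -/
theorem stmt11 [MeasureSpace Ω] [IsProbabilityMeasure (ℙ : Measure Ω)]
    [Fintype S] [Nonempty S] [MeasurableSpace S] [MeasurableSingletonClass S]
    (f : ℕ → Ω → S → S) (hmeas : ∀ n, Measurable (f n))
    (hindep : iIndepFun f ℙ)
    (hident : ∀ n, IdentDistrib (f n) (f 1) ℙ ℙ)
    (s t : ℕ) (hs : 1 ≤ s) (ht : 1 ≤ t) :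
    ℙ {ω | ((s + t : ℕ) : ℕ∞) < coalTimeE f ω} ≤
      ℙ {ω | (s : ℕ∞) < coalTimeE f ω} * ℙ {ω | (t : ℕ∞) < coalTimeE f ω} := by
  classical
  set A : Set Ω := {ω | ¬ IsConstMap S (fwdComp f s ω)} with hA
  set B : Set Ω := {ω | ¬ IsConstMap S (fwdComp (fun i => f (s + i)) t ω)} with hB
  have hAset : {ω | (s : ℕ∞) < coalTimeE f ω} = A := Set.ext fun ω => lt_coalTimeE_iff hs
  have hTset : {ω | (t : ℕ∞) < coalTimeE f ω} = {ω | ¬ IsConstMap S (fwdComp f t ω)} :=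
    Set.ext fun ω => lt_coalTimeE_iff ht
  -- the tail event at time `s + t` is contained in `A ∩ B`
  have hsub : {ω | ((s + t : ℕ) : ℕ∞) < coalTimeE f ω} ⊆ A ∩ B := by
    intro ω hω
    simp only [Set.mem_setOf_eq] at hω
    have hst : ¬ IsConstMap S (fwdComp f (s + t) ω) :=
      (lt_coalTimeE_iff (by omega)).mp hω
    constructor
    · have hle : ((s : ℕ∞)) ≤ ((s + t : ℕ) : ℕ∞) := by exact_mod_cast Nat.le_add_right s t
      exact (lt_coalTimeE_iff hs).mp (lt_of_le_of_lt hle hω)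
    · show ω ∈ B
      rw [hB]
      intro hc
      obtain ⟨c, hc'⟩ := hc
      apply hst
      refine ⟨c, ?_⟩
      rw [fwdComp_add s t, hc']
      rfl
  -- independence of the two blocks
  set Φ₁ : Ω → ((i : Finset.Icc 1 s) → S → S) := fun ω i => f i ω with hΦ₁
  set Φ₂ : Ω → ((i : Finset.Icc (s + 1) (s + t)) → S → S) := fun ω i => f i ω with hΦ₂
  set D₁ : Set ((i : Finset.Icc 1 s) → S → S) :=
    {g | ¬ IsConstMap S (fwdComp (fun k (g' : (i : Finset.Icc 1 s) → S → S) =>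
      if hk : k ∈ Finset.Icc 1 s then g' ⟨k, hk⟩ else id) s g)} with hD₁
  set D₂ : Set ((i : Finset.Icc (s + 1) (s + t)) → S → S) :=
    {g | ¬ IsConstMap S (fwdComp (fun k (g' : (i : Finset.Icc (s + 1) (s + t)) → S → S) =>
      if hk : s + k ∈ Finset.Icc (s + 1) (s + t) then g' ⟨s + k, hk⟩ else id) t g)} with hD₂
  have he1 : ∀ ω, fwdComp (fun k (g' : (i : Finset.Icc 1 s) → S → S) =>
      if hk : k ∈ Finset.Icc 1 s then g' ⟨k, hk⟩ else id) s (Φ₁ ω) = fwdComp f s ω := by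
    intro ω
    apply fwdComp_congr
    intro k h1 h2
    rw [dif_pos (Finset.mem_Icc.mpr ⟨h1, h2⟩)]
  have he2 : ∀ ω, fwdComp (fun k (g' : (i : Finset.Icc (s + 1) (s + t)) → S → S) =>
      if hk : s + k ∈ Finset.Icc (s + 1) (s + t) then g' ⟨s + k, hk⟩ else id) t (Φ₂ ω)
      = fwdComp (fun i => f (s + i)) t ω := by
    intro ω
    apply fwdComp_congr
    intro k h1 h2
    rw [dif_pos (Finset.mem_Icc.mpr ⟨by omega, by omega⟩)]
  have hA1 : A = Φ₁ ⁻¹' D₁ := by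
    ext ω
    simp only [hA, hD₁, Set.mem_setOf_eq, Set.mem_preimage]
    rw [he1 ω]
  have hB1 : B = Φ₂ ⁻¹' D₂ := by
    ext ω
    simp only [hB, hD₂, Set.mem_setOf_eq, Set.mem_preimage]
    rw [he2 ω]
  have hind : IndepFun Φ₁ Φ₂ ℙ := by
    apply hindep.indepFun_finset (Finset.Icc 1 s) (Finset.Icc (s + 1) (s + t)) _ hmeas
    rw [Finset.disjoint_left]
    intro k hk hk'
    simp only [Finset.mem_Icc] at hk hk'
    omega
  have hmul : ℙ (A ∩ B) = ℙ A * ℙ B := by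
    rw [hA1, hB1]
    exact (indepFun_iff_measure_inter_preimage_eq_mul.mp hind) D₁ D₂
      (Set.to_countable _).measurableSet (Set.to_countable _).measurableSet
  -- identical distribution of the second block with the first `t` maps
  have hB2 : ℙ B = ℙ {ω | (t : ℕ∞) < coalTimeE f ω} := by
    have hC : ∀ a : ℕ, {ω | ¬ IsConstMap S (fwdComp (fun i => f (a + i)) t ω)}
        = (fun ω (i : Fin t) => f (a + 1 + (i : ℕ)) ω) ⁻¹'
            {g | ¬ IsConstMap S (tupleComp t g)} := by
      intro a
      ext ω
      simp only [Set.mem_setOf_eq, Set.mem_preimage]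
      rw [fwdComp_eq_tupleComp a t]
    have h0 : {ω | ¬ IsConstMap S (fwdComp f t ω)}
        = {ω | ¬ IsConstMap S (fwdComp (fun i => f (0 + i)) t ω)} := by
      ext ω
      simp only [Set.mem_setOf_eq]
      rw [fwdComp_congr (f := fun i => f (0 + i)) (g := f) (ω := ω) (ω' := ω)
        (fun k _ _ => by show f (0 + k) ω = f k ω; rw [Nat.zero_add])]
    rw [hTset, hB, hC s, h0, hC 0]
    exact tuple_prob_eq hmeas hindep hident s 0 t _
  calc ℙ {ω | ((s + t : ℕ) : ℕ∞) < coalTimeE f ω} ≤ ℙ (A ∩ B) := measure_mono hsub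
    _ = ℙ A * ℙ B := hmul
    _ = ℙ {ω | (s : ℕ∞) < coalTimeE f ω} * ℙ {ω | (t : ℕ∞) < coalTimeE f ω} := by
        rw [hAset, hB2]
end
end
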